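/- Assume in addition that ν is finite and nonzero, and let p̄ be the unique solution in (max(p̲,−1), ∞) of Φ(q) = (q+1)Φ′(q). Then the map q ↦ Φ(q)/(q+1) is strictly increasing on (max(p̲,−1), p̄) and strictly decreasing on (p̄, ∞). -/

import Mathlib

open MeasureTheory Real Set Filter

noncomputable section

/-- Real power with the convention `0 ^ r = 0` for every exponent `r`. -/
def pw (x r : ℝ) : ℝ := if x = 0 then 0 else x ^ r

/-- The state space `S` of ranked mass configurations: nonincreasing nonnegative
sequences with total sum at most `1` (sum condition stated via partial sums). -/
def inS (s : ℕ → ℝ) : Prop :=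
  (∀ i, 0 ≤ s i) ∧ (∀ i, s (i + 1) ≤ s i) ∧ ∀ F : Finset ℕ, ∑ i ∈ F, s i ≤ 1

/-- The configuration `(1, 0, 0, …)`. -/
def oneConf : ℕ → ℝ := fun i => if i = 0 then 1 else 0

/-- A dislocation measure: a measure on sequences, carried by `S`, giving no mass
to `(1,0,…)`, integrating `1 - s₁`, and conserving total mass (carried by
configurations with `Σ sᵢ = 1`). -/
structure IsDislocation (ν : Measure (ℕ → ℝ)) : Prop where
  carried : ν {s | ¬ (inS s ∧ HasSum s 1)} = 0
  no_one : ν {oneConf} = 0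
  int_one_sub : ∫⁻ s, ENNReal.ofReal (1 - s 0) ∂ν < ⊤

/-- `p̲ := inf {p ∈ ℝ : ∫_S Σ_{i≥2} sᵢ^{p+1} ν(ds) < ∞}`, as an extended real
(possibly `-∞`, and `+∞` if no `p` qualifies). -/
def pLow (ν : Measure (ℕ → ℝ)) : EReal :=
  sInf {x : EReal | ∃ p : ℝ, x = (p : EReal) ∧
    ∫⁻ s, ∑' i, ENNReal.ofReal (pw (s (i + 1)) (p + 1)) ∂ν < ⊤}

/-- `Φ(q) := ∫_S (1 - Σ_{i≥1} sᵢ^{q+1}) ν(ds)`. -/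
def Phi (ν : Measure (ℕ → ℝ)) (q : ℝ) : ℝ :=
  ∫ s, (1 - ∑' i, pw (s i) (q + 1)) ∂ν

lemma measurable_pw (r : ℝ) : Measurable fun x : ℝ => pw x r := by
  unfold pw
  exact Measurable.ite (measurableSet_singleton 0) measurable_const
    (measurable_id.pow_const r)

lemma pw_nonneg {x : ℝ} (hx : 0 ≤ x) (r : ℝ) : 0 ≤ pw x r := by
  unfold pw
  split
  · exact le_refl 0
  · positivity

lemma pw_le_one {x : ℝ} (h0 : 0 ≤ x) (h1 : x ≤ 1) {r : ℝ} (hr : 0 < r) : pw x r ≤ 1 := by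
  unfold pw
  split
  · exact zero_le_one
  · exact Real.rpow_le_one h0 h1 hr.le

lemma pw_mono_exp {x : ℝ} (h0 : 0 ≤ x) (h1 : x ≤ 1) {r r' : ℝ} (h : r ≤ r') :
    pw x r' ≤ pw x r := by
  unfold pw
  split
  · exact le_refl 0
  · exact Real.rpow_le_rpow_of_exponent_ge (lt_of_le_of_ne h0 (Ne.symm ‹_›)) h1 h

/-- key log bound -/
lemma pw_log_bound {x : ℝ} (h0 : 0 ≤ x) (h1 : x ≤ 1) {r r' δ : ℝ} (hδ : 0 < δ)
    (h : r + δ ≤ r') : |pw x r' * Real.log x| ≤ (1/δ) * pw x r := by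
  rcases eq_or_lt_of_le h0 with h0' | h0'
  · simp [pw, ← h0']
  have hx0 : x ≠ 0 := ne_of_gt h0'
  rcases eq_or_lt_of_le h1 with h1' | h1'
  · simp [pw, hx0, h1', Real.log_one]
    positivity
  -- 0 < x < 1
  have hlog : 0 < -Real.log x := by
    simpa using Real.log_neg h0' h1'
  have key : -Real.log x ≤ x ^ (-δ) / δ := by
    have h2 : Real.log (x ^ (-δ)) ≤ x ^ (-δ) - 1 :=
      Real.log_le_sub_one_of_pos (Real.rpow_pos_of_pos h0' (-δ))
    rw [Real.log_rpow h0'] at h2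
    have : -δ * Real.log x ≤ x ^ (-δ) := by linarith [Real.rpow_pos_of_pos h0' (-δ)]
    rw [le_div_iff₀ hδ]
    nlinarith
  have hxr' : pw x r' = x ^ r' := by simp [pw, hx0]
  have hxr : pw x r = x ^ r := by simp [pw, hx0]
  rw [hxr', hxr, abs_mul, abs_of_nonneg (Real.rpow_nonneg h0 r'), abs_of_neg (by linarith : Real.log x < 0)]
  calc x ^ r' * -Real.log x ≤ x ^ r' * (x ^ (-δ) / δ) := by
        apply mul_le_mul_of_nonneg_left key (Real.rpow_nonneg h0 r')
    _ = (1/δ) * (x ^ r' * x ^ (-δ)) := by ring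
    _ = (1/δ) * x ^ (r' - δ) := by rw [← Real.rpow_add h0', sub_eq_add_neg]
    _ ≤ (1/δ) * x ^ r := by
        apply mul_le_mul_of_nonneg_left _ (by positivity)
        exact Real.rpow_le_rpow_of_exponent_ge h0' h1'.le (by linarith)

/-- derivative in the exponent -/
lemma pw_hasDerivAt {x : ℝ} (h0 : 0 ≤ x) (q : ℝ) :
    HasDerivAt (fun q : ℝ => pw x (q + 1)) (pw x (q + 1) * Real.log x) q := by
  rcases eq_or_lt_of_le h0 with h0' | h0'
  · have : (fun q : ℝ => pw x (q + 1)) = fun _ => (0:ℝ) := by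
      funext q; simp [pw, ← h0']
    rw [this]
    simpa [pw, ← h0'] using hasDerivAt_const q (0:ℝ)
  · have hx0 : x ≠ 0 := ne_of_gt h0'
    have h1 : HasDerivAt (fun q : ℝ => x ^ q) (x ^ (q+1) * Real.log x) (q + 1) :=
      (Real.hasStrictDerivAt_const_rpow h0' (q+1)).hasDerivAt
    have h2 : HasDerivAt (fun q : ℝ => q + 1) 1 q := (hasDerivAt_id q).add_const 1
    have := HasDerivAt.comp q h1 h2
    simp only [mul_one] at this
    have heq : (fun q : ℝ => x ^ (q+1)) = fun q : ℝ => pw x (q + 1) := by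
      funext q; simp [pw, hx0]
    rw [Function.comp_def, heq] at this
    simpa [pw, hx0] using this

lemma inS.le_one {s : ℕ → ℝ} (hs : inS s) (i : ℕ) : s i ≤ 1 := by
  have h0 : s i ≤ s 0 := by
    induction i with
    | zero => exact le_refl _
    | succ n ih => exact (hs.2.1 n).trans ih
  have h1 : s 0 ≤ 1 := by simpa using hs.2.2 {0}
  exact h0.trans h1



instance : SigmaFinite (Measure.count : Measure ℕ) := by
  constructor
  refine ⟨⟨fun n => Set.Iio n, fun _ => trivial, fun n => ?_, ?_⟩⟩
  · rw [Measure.count_apply_finite _ (Set.finite_Iio n)]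
    exact ENNReal.natCast_lt_top _
  · ext x; simp [Set.mem_iUnion]

/-- The function under the product integral. -/
def Ffun (q : ℝ) : (ℕ → ℝ) × ℕ → ℝ := fun z => pw (z.1 z.2) (q + 1)

/-- Its derivative in `q`. -/
def F'fun (q : ℝ) : (ℕ → ℝ) × ℕ → ℝ := fun z => pw (z.1 z.2) (q + 1) * Real.log (z.1 z.2)

/-- The derivative of `Phi`. -/
def Dfun (ν : Measure (ℕ → ℝ)) (q : ℝ) : ℝ :=
  -∫ z, F'fun q z ∂(ν.prod Measure.count)

lemma measurable_eval : Measurable fun z : (ℕ → ℝ) × ℕ => z.1 z.2 :=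
  measurable_from_prod_countable_left fun i => measurable_pi_apply i

lemma measurable_Ffun (q : ℝ) : Measurable (Ffun q) :=
  (measurable_pw _).comp measurable_eval

lemma measurable_F'fun (q : ℝ) : Measurable (F'fun q) :=
  ((measurable_pw _).comp measurable_eval).mul (Real.measurable_log.comp measurable_eval)

lemma ae_fst (ν : Measure (ℕ → ℝ)) {P : (ℕ → ℝ) → Prop} (h : ∀ᵐ s ∂ν, P s) :
    ∀ᵐ z ∂(ν.prod (Measure.count : Measure ℕ)), P z.1 := by
  rw [ae_iff] at h ⊢
  exact (Measure.quasiMeasurePreserving_fst (μ := ν)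
    (ν := (Measure.count : Measure ℕ))).preimage_null h

lemma exists_p (ν : Measure (ℕ → ℝ)) {q₀ : ℝ} (h1 : -1 < q₀) (h2 : pLow ν < (q₀ : EReal))
    (haeS : ∀ᵐ s ∂ν, inS s) :
    ∃ p, -1 < p ∧ p < q₀ ∧
      ∫⁻ s, ∑' i, ENNReal.ofReal (pw (s (i + 1)) (p + 1)) ∂ν < ⊤ := by
  obtain ⟨x, hx, hxlt⟩ := sInf_lt_iff.mp h2
  obtain ⟨p, rfl, hint⟩ := hx
  have hp : p < q₀ := EReal.coe_lt_coe_iff.mp hxlt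
  refine ⟨max p ((q₀ - 1) / 2), lt_max_of_lt_right (by linarith), max_lt hp (by linarith), ?_⟩
  refine lt_of_le_of_lt (lintegral_mono_ae ?_) hint
  filter_upwards [haeS] with s hs
  refine ENNReal.tsum_le_tsum fun i => ENNReal.ofReal_le_ofReal ?_
  exact pw_mono_exp (hs.1 _) (hs.le_one _) (by linarith [le_max_left p ((q₀ - 1) / 2)])

lemma summable_of_tsum_ofReal_ne_top {f : ℕ → ℝ} (h0 : ∀ i, 0 ≤ f i)
    (h : ∑' i, ENNReal.ofReal (f i) ≠ ⊤) : Summable f := by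
  have h2 : Summable fun i => (f i).toNNReal := by
    rw [← ENNReal.tsum_coe_ne_top_iff_summable]
    convert h using 2
    rfl
  have := NNReal.summable_coe.mpr h2
  exact this.congr fun i => by simp [Real.coe_toNNReal _ (h0 i)]


lemma key (ν : Measure (ℕ → ℝ)) (hν : IsDislocation ν) [IsFiniteMeasure ν] {q₀ : ℝ}
    (h1 : -1 < q₀) (h2 : pLow ν < (q₀ : EReal)) :
    Integrable (F'fun q₀) (ν.prod (Measure.count : Measure ℕ)) ∧
      HasDerivAt (Phi ν) (Dfun ν q₀) q₀ := by
  have haeS : ∀ᵐ s ∂ν, inS s ∧ HasSum s 1 := ae_iff.mpr hν.carried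
  obtain ⟨p, hpm1, hpq, hfin⟩ := exists_p ν h1 h2 (haeS.mono fun s h => h.1)
  set δ : ℝ := (q₀ - p) / 2 with hδdef
  have hδ : 0 < δ := by rw [hδdef]; linarith
  set μP := ν.prod (Measure.count : Measure ℕ) with hμP
  have haeZ : ∀ᵐ z ∂μP, inS z.1 := ae_fst ν (haeS.mono fun s h => h.1)
  -- the dominating function G and its integrability
  set G : (ℕ → ℝ) × ℕ → ℝ := fun z => pw (z.1 z.2) (p + 1) with hGdef
  have hGm : Measurable G := (measurable_pw _).comp measurable_eval
  have hGlint : ∫⁻ z, ENNReal.ofReal (G z) ∂μP < ⊤ := by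
    rw [hμP, lintegral_prod (fun z => ENNReal.ofReal (G z)) (hGm.ennreal_ofReal.aemeasurable)]
    have hcount : ∀ s : ℕ → ℝ,
        ∫⁻ i, ENNReal.ofReal (pw (s i) (p + 1)) ∂(Measure.count : Measure ℕ)
          = ENNReal.ofReal (pw (s 0) (p + 1))
              + ∑' i, ENNReal.ofReal (pw (s (i + 1)) (p + 1)) := by
      intro s
      rw [lintegral_count]
      exact tsum_eq_zero_add' ENNReal.summable
    have hmeas0 : Measurable fun s : ℕ → ℝ => ENNReal.ofReal (pw (s 0) (p + 1)) :=
      ((measurable_pw (p + 1)).comp (measurable_pi_apply 0)).ennreal_ofReal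
    have e1 : ∫⁻ s, ∫⁻ i, ENNReal.ofReal (G (s, i)) ∂(Measure.count : Measure ℕ) ∂ν
        = (∫⁻ s, ENNReal.ofReal (pw (s 0) (p + 1)) ∂ν)
            + ∫⁻ s, ∑' i, ENNReal.ofReal (pw (s (i + 1)) (p + 1)) ∂ν := by
      rw [← lintegral_add_left hmeas0]
      exact lintegral_congr fun s => hcount s
    have e2 : ∫⁻ s, ENNReal.ofReal (pw (s 0) (p + 1)) ∂ν < ⊤ := by
      have hb : ∫⁻ s, ENNReal.ofReal (pw (s 0) (p + 1)) ∂ν ≤ ∫⁻ _, 1 ∂ν := by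
        apply lintegral_mono_ae
        filter_upwards [haeS] with s hs
        exact ENNReal.ofReal_le_one.mpr (pw_le_one (hs.1.1 0) (hs.1.le_one 0) (by linarith))
      refine lt_of_le_of_lt hb ?_
      simp [measure_lt_top]
    rw [e1]
    exact ENNReal.add_lt_top.mpr ⟨e2, hfin⟩
  have hGint : Integrable G μP := by
    refine ⟨hGm.aestronglyMeasurable, ?_⟩
    rw [hasFiniteIntegral_iff_norm]
    calc ∫⁻ z, ENNReal.ofReal ‖G z‖ ∂μP = ∫⁻ z, ENNReal.ofReal (G z) ∂μP := by
          apply lintegral_congr_ae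
          filter_upwards [haeZ] with z hz
          exact congrArg ENNReal.ofReal (Real.norm_of_nonneg (pw_nonneg (hz.1 _) _))
      _ < ⊤ := hGlint
  -- integrability of Ffun q for q > p
  have hFint : ∀ q : ℝ, p < q → Integrable (Ffun q) μP := by
    intro q hq
    refine hGint.mono (measurable_Ffun q).aestronglyMeasurable ?_
    filter_upwards [haeZ] with z hz
    have e1 : ‖Ffun q z‖ = Ffun q z := Real.norm_of_nonneg (pw_nonneg (hz.1 _) _)
    have e2 : ‖G z‖ = G z := Real.norm_of_nonneg (pw_nonneg (hz.1 _) _)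
    rw [e1, e2]
    exact pw_mono_exp (hz.1 _) (hz.le_one _) (by linarith)
  -- apply the parametric derivative lemma
  have main := hasDerivAt_integral_of_dominated_loc_of_deriv_le (μ := μP)
    (F := fun q z => Ffun q z) (F' := fun q z => F'fun q z) (x₀ := q₀)
    (bound := fun z => (1 / δ) * G z) (Metric.ball_mem_nhds q₀ hδ)
    (Filter.Eventually.of_forall fun q => (measurable_Ffun q).aestronglyMeasurable)
    (hFint q₀ hpq) ((measurable_F'fun q₀).aestronglyMeasurable)
    ?_ (hGint.const_mul _) ?_
  rotate_left
  · -- bound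
    filter_upwards [haeZ] with z hz q hq
    have hx0 : 0 ≤ z.1 z.2 := hz.1 _
    have hx1 : z.1 z.2 ≤ 1 := hz.le_one _
    have hq' : p + 1 + δ ≤ q + 1 := by
      have := abs_lt.mp (mem_ball_iff_norm.mp hq)
      rw [hδdef] at *
      linarith [this.1]
    have hb := pw_log_bound hx0 hx1 hδ hq'
    rw [abs_mul] at hb
    simpa [F'fun] using hb
  · -- differentiability
    filter_upwards [haeZ] with z hz q _
    exact pw_hasDerivAt (hz.1 _) q
  obtain ⟨hF'int, hder⟩ := main
  refine ⟨hF'int, ?_⟩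
  -- identify Phi near q₀ with the product integral
  have haefin : ∀ᵐ s ∂ν, inS s ∧ ∑' i, ENNReal.ofReal (pw (s (i + 1)) (p + 1)) ≠ ⊤ := by
    have h := ae_lt_top (Measurable.ennreal_tsum fun i =>
      ENNReal.measurable_ofReal.comp ((measurable_pw _).comp (measurable_pi_apply (i + 1)))) hfin.ne
    filter_upwards [haeS, h] with s hs hlt
    exact ⟨hs.1, hlt.ne⟩
  have hsummable : ∀ᵐ s ∂ν, ∀ q : ℝ, p < q → Summable fun i => pw (s i) (q + 1) := by
    filter_upwards [haefin] with s hs q hq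
    have htail : Summable fun i => pw (s (i + 1)) (p + 1) :=
      summable_of_tsum_ofReal_ne_top (fun i => pw_nonneg (hs.1.1 _) _) hs.2
    have hfull : Summable fun i => pw (s i) (p + 1) := by
      rwa [← summable_nat_add_iff 1]
    exact hfull.of_nonneg_of_le (fun i => pw_nonneg (hs.1.1 _) _)
      (fun i => pw_mono_exp (hs.1.1 _) (hs.1.le_one _) (by linarith))
  have hcounteq : ∀ q : ℝ, p < q → ∀ᵐ s ∂ν,
      (∫ i, Ffun q (s, i) ∂(Measure.count : Measure ℕ)) = ∑' i, pw (s i) (q + 1) := by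
    intro q hq
    filter_upwards [hsummable, haeS] with s hs hs'
    have hsum := hs q hq
    have hnn : ∀ i, 0 ≤ pw (s i) (q + 1) := fun i => pw_nonneg (hs'.1.1 i) _
    have hint : Integrable (fun i => Ffun q (s, i)) (Measure.count : Measure ℕ) := by
      rw [integrable_count_iff]
      exact hsum.congr fun i => (Real.norm_of_nonneg (hnn i)).symm
    rw [integral_countable' hint]
    simp [Ffun, Measure.count_singleton]
  have hPhiEq : ∀ q ∈ Metric.ball q₀ δ,
      Phi ν q = (ν Set.univ).toReal - ∫ z, Ffun q z ∂μP := by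
    intro q hq
    have hqp : p < q := by
      have := abs_lt.mp (mem_ball_iff_norm.mp hq)
      rw [hδdef] at this; linarith [this.1]
    have hTint : Integrable (fun s => ∑' i, pw (s i) (q + 1)) ν :=
      ((hFint q hqp).integral_prod_left).congr (hcounteq q hqp)
    have hsplit : Phi ν q = ∫ s, (1 : ℝ) ∂ν - ∫ s, ∑' i, pw (s i) (q + 1) ∂ν := by
      rw [Phi, ← integral_sub (integrable_const 1) hTint]
    rw [hsplit]
    congr 1
    · simp [Measure.real]
    rw [hμP, integral_prod _ (hFint q hqp)]
    apply integral_congr_ae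
    filter_upwards [hcounteq q hqp] with s h
    exact h.symm
  have hev : Phi ν =ᶠ[nhds q₀] fun q => (ν Set.univ).toReal - ∫ z, Ffun q z ∂μP :=
    Filter.eventually_of_mem (Metric.ball_mem_nhds q₀ hδ) hPhiEq
  have hD : HasDerivAt (fun q => (ν Set.univ).toReal - ∫ z, Ffun q z ∂μP)
      (-(∫ z, F'fun q₀ z ∂μP)) q₀ := hder.const_sub _
  exact hD.congr_of_eventuallyEq hev


lemma D_antitone (ν : Measure (ℕ → ℝ)) (hν : IsDislocation ν) [IsFiniteMeasure ν] {a b : ℝ}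
    (ha1 : -1 < a) (ha2 : pLow ν < (a : EReal)) (hab : a ≤ b) : Dfun ν b ≤ Dfun ν a := by
  have hb1 : -1 < b := lt_of_lt_of_le ha1 hab
  have hb2 : pLow ν < (b : EReal) := lt_of_lt_of_le ha2 (EReal.coe_le_coe_iff.mpr hab)
  have hIa := (key ν hν ha1 ha2).1
  have hIb := (key ν hν hb1 hb2).1
  have haeZ : ∀ᵐ z ∂(ν.prod (Measure.count : Measure ℕ)), inS z.1 :=
    ae_fst ν ((ae_iff.mpr hν.carried).mono fun s (h : inS s ∧ HasSum s 1) => h.1)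
  unfold Dfun
  rw [← integral_neg, ← integral_neg]
  apply integral_mono_ae hIb.neg hIa.neg
  filter_upwards [haeZ] with z hz
  have hx0 : 0 ≤ z.1 z.2 := hz.1 _
  have hx1 : z.1 z.2 ≤ 1 := hz.le_one _
  have hlog : Real.log (z.1 z.2) ≤ 0 := Real.log_nonpos hx0 hx1
  have hmono := pw_mono_exp hx0 hx1 (by linarith : a + 1 ≤ b + 1)
  have h0b := pw_nonneg hx0 (b + 1)
  simp only [F'fun, Pi.neg_apply]
  nlinarith

/-- Assume `ν` finite and nonzero, and let `p̄` be the unique solution in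
`J := (max(p̲,-1), ∞)` of `Φ(q) = (q+1)Φ'(q)`. Then `q ↦ Φ(q)/(q+1)` is
strictly increasing on `(max(p̲,-1), p̄)` and strictly decreasing on `(p̄, ∞)`. -/
theorem phi_ratio_monotonicity (ν : Measure (ℕ → ℝ)) (hν : IsDislocation ν)
    [IsFiniteMeasure ν] (hν0 : ν ≠ 0) (pbar : ℝ)
    (hmem : -1 < pbar ∧ pLow ν < (pbar : EReal))
    (heq : Phi ν pbar = (pbar + 1) * deriv (Phi ν) pbar)
    (huniq : ∀ q : ℝ, -1 < q → pLow ν < (q : EReal) →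
      Phi ν q = (q + 1) * deriv (Phi ν) q → q = pbar) :
    StrictMonoOn (fun q => Phi ν q / (q + 1))
        {q : ℝ | (-1 < q ∧ pLow ν < (q : EReal)) ∧ q < pbar} ∧
      StrictAntiOn (fun q => Phi ν q / (q + 1)) (Set.Ioi pbar) := by
  obtain ⟨hpb1, hpb2⟩ := hmem
  have hkey : ∀ q : ℝ, -1 < q → pLow ν < (q : EReal) → HasDerivAt (Phi ν) (Dfun ν q) q :=
    fun q h1 h2 => (key ν hν h1 h2).2
  have hupJ : ∀ a x : ℝ, -1 < a → pLow ν < (a : EReal) → a ≤ x →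
      -1 < x ∧ pLow ν < (x : EReal) := fun a x h1 h2 hx =>
    ⟨lt_of_lt_of_le h1 hx, lt_of_lt_of_le h2 (EReal.coe_le_coe_iff.mpr hx)⟩
  set ψ : ℝ → ℝ := fun q => (q + 1) * Dfun ν q - Phi ν q with hψdef
  have hψpbar : ψ pbar = 0 := by
    have hd : deriv (Phi ν) pbar = Dfun ν pbar := (hkey pbar hpb1 hpb2).deriv
    rw [hψdef]
    simp only
    rw [← hd]
    linarith [heq]
  have hψanti : ∀ a b : ℝ, -1 < a → pLow ν < (a : EReal) → a < b → ψ b ≤ ψ a := by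
    intro a b ha1 ha2 hab
    obtain ⟨c, hc, hceq⟩ := exists_hasDerivAt_eq_slope (Phi ν) (Dfun ν) hab
      (fun x hx => ((hkey x (hupJ a x ha1 ha2 hx.1).1 (hupJ a x ha1 ha2 hx.1).2).continuousAt).continuousWithinAt)
      (fun x hx => hkey x (hupJ a x ha1 ha2 hx.1.le).1 (hupJ a x ha1 ha2 hx.1.le).2)
    have h1 : Phi ν b - Phi ν a = (b - a) * Dfun ν c := by
      rw [eq_div_iff (ne_of_gt (sub_pos.mpr hab))] at hceq
      linarith
    have hDba : Dfun ν b ≤ Dfun ν a := D_antitone ν hν ha1 ha2 hab.le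
    have hDbc : Dfun ν b ≤ Dfun ν c :=
      D_antitone ν hν (hupJ a c ha1 ha2 hc.1.le).1 (hupJ a c ha1 ha2 hc.1.le).2 hc.2.le
    have e1 : (a + 1) * (Dfun ν b - Dfun ν a) ≤ 0 :=
      mul_nonpos_of_nonneg_of_nonpos (by linarith) (by linarith)
    have e2 : (b - a) * (Dfun ν b - Dfun ν c) ≤ 0 :=
      mul_nonpos_of_nonneg_of_nonpos (by linarith) (by linarith)
    simp only [hψdef]
    nlinarith
  have hψne : ∀ q : ℝ, -1 < q → pLow ν < (q : EReal) → q ≠ pbar → ψ q ≠ 0 := by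
    intro q h1 h2 hne h0
    apply hne
    apply huniq q h1 h2
    have hd : deriv (Phi ν) q = Dfun ν q := (hkey q h1 h2).deriv
    rw [hd]
    rw [hψdef] at h0
    simp only at h0
    linarith
  have hψpos : ∀ q : ℝ, -1 < q → pLow ν < (q : EReal) → q < pbar → 0 < ψ q := by
    intro q h1 h2 h3
    have hge : 0 ≤ ψ q := by
      have := hψanti q pbar h1 h2 h3
      rw [hψpbar] at this
      linarith
    exact lt_of_le_of_ne hge (Ne.symm (hψne q h1 h2 (ne_of_lt h3)))
  have hψneg : ∀ q : ℝ, pbar < q → ψ q < 0 := by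
    intro q h3
    have hq1 : -1 < q := hpb1.trans h3
    have hq2 : pLow ν < (q : EReal) := hpb2.trans_le (EReal.coe_le_coe_iff.mpr h3.le)
    have hle : ψ q ≤ 0 := by
      have := hψanti pbar q hpb1 hpb2 h3
      rw [hψpbar] at this
      linarith
    exact lt_of_le_of_ne hle (hψne q hq1 hq2 (ne_of_gt h3))
  have hratio : ∀ q : ℝ, -1 < q → pLow ν < (q : EReal) →
      HasDerivAt (fun q => Phi ν q / (q + 1)) (ψ q / (q + 1) ^ 2) q := by
    intro q h1 h2
    have hv : HasDerivAt (fun q : ℝ => q + 1) 1 q := (hasDerivAt_id q).add_const 1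
    have hd := (hkey q h1 h2).div hv (by intro h; linarith [h] : q + 1 ≠ 0)
    refine HasDerivAt.congr_deriv hd ?_
    rw [hψdef]
    field_simp
  constructor
  · apply strictMonoOn_of_deriv_pos
    · rw [convex_iff_ordConnected]
      constructor
      intro x hx y hy z hz
      exact ⟨⟨lt_of_lt_of_le hx.1.1 hz.1,
        lt_of_lt_of_le hx.1.2 (EReal.coe_le_coe_iff.mpr hz.1)⟩, lt_of_le_of_lt hz.2 hy.2⟩
    · intro q hq
      exact ((hratio q hq.1.1 hq.1.2).continuousAt).continuousWithinAt
    · intro q hq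
      have hq' := interior_subset hq
      rw [(hratio q hq'.1.1 hq'.1.2).deriv]
      exact div_pos (hψpos q hq'.1.1 hq'.1.2 hq'.2) (pow_pos (by linarith [hq'.1.1] : (0:ℝ) < q + 1) 2)
  · apply strictAntiOn_of_deriv_neg (convex_Ioi pbar)
    · intro q hq
      have hq1 : -1 < q := hpb1.trans hq
      have hq2 : pLow ν < (q : EReal) := hpb2.trans_le (EReal.coe_le_coe_iff.mpr (le_of_lt hq))
      exact ((hratio q hq1 hq2).continuousAt).continuousWithinAt
    · intro q hq
      rw [interior_Ioi] at hq
      have hq1 : -1 < q := hpb1.trans hq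
      have hq2 : pLow ν < (q : EReal) := hpb2.trans_le (EReal.coe_le_coe_iff.mpr (le_of_lt hq))
      rw [(hratio q hq1 hq2).deriv]
      exact div_neg_of_neg_of_pos (hψneg q hq) (pow_pos (by linarith : (0:ℝ) < q + 1) 2)
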